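/- Let s ≥ 3, let u₁,…,u_{s−2} be nonzero real numbers, let L = {x ∈ ℝ^s : u₁x₁ + … + u_{s−2}x_{s−2} + x_{s−1} = 0}, and let S_L be the convex cone of quadratic forms Q(x) = a₁x₁² + … + a_{s−2}x_{s−2}² + (m/2)(x_{s−1}² − x_s²) − t·x_{s−1}x_s (with a_i, m, t ∈ ℝ) that are positive semidefinite on L. If Q spans an extreme ray of S_L, then either Q = a_ix_i² for some i ≤ s−2 with a_i > 0, or all a_i are positive, m < 0, and 2m/(m² + t²) + Σᵢ u_i²/a_i = 0. Conversely, every form of this shape with all a_i > 0, m < 0 and 2m/(m² + t²) + Σᵢ u_i²/a_i = 0 is positive semidefinite on L and spans an extreme ray of S_L. -/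

import Mathlib

/-- The quadratic form Q(x) = a₁x₁² + … + a_{s−2}x_{s−2}² + (m/2)(x_{s−1}² − x_s²) − t·x_{s−1}x_s
on ℝ^s (the last two coordinates of x are x_{s−1} and x_s). -/
noncomputable def Q19 (s : ℕ) (hs : 3 ≤ s) (a : Fin (s - 2) → ℝ) (m t : ℝ) : (Fin s → ℝ) → ℝ :=
  fun x =>
    (∑ i, a i * x (Fin.castLE (Nat.sub_le s 2) i) ^ 2) +
    m / 2 * (x ⟨s - 2, by omega⟩ ^ 2 - x ⟨s - 1, by omega⟩ ^ 2) -
    t * (x ⟨s - 2, by omega⟩ * x ⟨s - 1, by omega⟩)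

/-- Membership in the hyperplane L = {x ∈ ℝ^s : u₁x₁ + … + u_{s−2}x_{s−2} + x_{s−1} = 0}. -/
def L19 (s : ℕ) (hs : 3 ≤ s) (u : Fin (s - 2) → ℝ) (x : Fin s → ℝ) : Prop :=
  (∑ i, u i * x (Fin.castLE (Nat.sub_le s 2) i)) + x ⟨s - 2, by omega⟩ = 0

/-- The form Q19 with parameters (a, m, t) is positive semidefinite on L. -/
def PSD19 (s : ℕ) (hs : 3 ≤ s) (u : Fin (s - 2) → ℝ) (a : Fin (s - 2) → ℝ) (m t : ℝ) : Prop :=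
  ∀ x : Fin s → ℝ, L19 s hs u x → 0 ≤ Q19 s hs a m t x

/-- The form Q19 with parameters (a, m, t) spans an extreme ray of the cone S_L of forms of
this shape that are positive semidefinite on L. -/
def ExtremeRay19 (s : ℕ) (hs : 3 ≤ s) (u : Fin (s - 2) → ℝ)
    (a : Fin (s - 2) → ℝ) (m t : ℝ) : Prop :=
  Q19 s hs a m t ≠ 0 ∧ PSD19 s hs u a m t ∧
  ∀ (a₁ : Fin (s - 2) → ℝ) (m₁ t₁ : ℝ) (a₂ : Fin (s - 2) → ℝ) (m₂ t₂ : ℝ),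
    PSD19 s hs u a₁ m₁ t₁ → PSD19 s hs u a₂ m₂ t₂ →
    (∀ x, Q19 s hs a m t x = Q19 s hs a₁ m₁ t₁ x + Q19 s hs a₂ m₂ t₂ x) →
    (∃ c : ℝ, 0 ≤ c ∧ ∀ x, Q19 s hs a₁ m₁ t₁ x = c * Q19 s hs a m t x) ∧
    (∃ c : ℝ, 0 ≤ c ∧ ∀ x, Q19 s hs a₂ m₂ t₂ x = c * Q19 s hs a m t x)

/-- helper: build a point of ℝ^s from first s-2 coords, then y, then z. -/
noncomputable def pt19 (s : ℕ) (c : Fin (s - 2) → ℝ) (y z : ℝ) : Fin s → ℝ :=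
  fun k => if h : (k : ℕ) < s - 2 then c ⟨k, h⟩ else if (k : ℕ) = s - 2 then y else z

lemma pt19_cast (s : ℕ) (c : Fin (s - 2) → ℝ) (y z : ℝ) (i : Fin (s - 2)) :
    pt19 s c y z (Fin.castLE (Nat.sub_le s 2) i) = c i := by
  simp [pt19]

lemma pt19_y (s : ℕ) (hs : 3 ≤ s) (c : Fin (s - 2) → ℝ) (y z : ℝ) :
    pt19 s c y z ⟨s - 2, by omega⟩ = y := by
  simp [pt19]

lemma pt19_z (s : ℕ) (hs : 3 ≤ s) (c : Fin (s - 2) → ℝ) (y z : ℝ) :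
    pt19 s c y z ⟨s - 1, by omega⟩ = z := by
  have h1 : ¬ (s - 1 < s - 2) := by omega
  have h2 : ¬ (s - 1 = s - 2) := by omega
  simp [pt19, h1, h2]

lemma Q19_pt (s : ℕ) (hs : 3 ≤ s) (a : Fin (s - 2) → ℝ) (m t : ℝ)
    (c : Fin (s - 2) → ℝ) (y z : ℝ) :
    Q19 s hs a m t (pt19 s c y z) =
      (∑ i, a i * c i ^ 2) + m / 2 * (y ^ 2 - z ^ 2) - t * (y * z) := by
  rw [Q19, pt19_y s hs, pt19_z s hs]
  congr 2
  exact Finset.sum_congr rfl fun i _ => by rw [pt19_cast]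

lemma L19_pt (s : ℕ) (hs : 3 ≤ s) (u : Fin (s - 2) → ℝ)
    (c : Fin (s - 2) → ℝ) (y z : ℝ) :
    L19 s hs u (pt19 s c y z) ↔ (∑ i, u i * c i) + y = 0 := by
  rw [L19, pt19_y s hs,
    Finset.sum_congr rfl fun (i : Fin (s-2)) _ => by rw [pt19_cast s c y z i]]

lemma lin_zero (β γ : ℝ) (h : ∀ r : ℝ, 0 ≤ β * r + γ * r ^ 2) : β = 0 := by
  by_contra hβ
  have hg : (0:ℝ) < |γ| + 1 := by positivity
  have h1 := h (-β / (|γ| + 1))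
  have hb2 : 0 < β ^ 2 := by positivity
  have hgle : γ ≤ |γ| := le_abs_self γ
  have key : β * (-β / (|γ| + 1)) + γ * (-β / (|γ| + 1)) ^ 2
      = (β ^ 2 * (γ - |γ| - 1)) / (|γ| + 1) ^ 2 := by
    field_simp
    ring
  rw [key] at h1
  have : (β ^ 2 * (γ - |γ| - 1)) / (|γ| + 1) ^ 2 < 0 := by
    apply div_neg_of_neg_of_pos
    · nlinarith
    · positivity
  linarith

lemma aff_zero (A B : ℝ) (h : ∀ r : ℝ, 0 ≤ A + B * r) : B = 0 := by
  by_contra hB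
  have h1 := h ((-A - 1) / B)
  rw [mul_div_cancel₀ _ hB] at h1
  linarith

lemma fin_nonempty (s : ℕ) (hs : 3 ≤ s) : Nonempty (Fin (s - 2)) :=
  ⟨⟨0, by omega⟩⟩

lemma sigma_pos (s : ℕ) (hs : 3 ≤ s) (u a : Fin (s - 2) → ℝ)
    (hu : ∀ i, u i ≠ 0) (ha : ∀ i, 0 < a i) : 0 < ∑ i, u i ^ 2 / a i := by
  have : Nonempty (Fin (s - 2)) := fin_nonempty s hs
  exact Finset.sum_pos (fun i _ => div_pos (pow_two_pos_of_ne_zero (hu i)) (ha i)) Finset.univ_nonempty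

lemma psd_diag (s : ℕ) (hs : 3 ≤ s) (u b : Fin (s - 2) → ℝ) (hb : ∀ i, 0 ≤ b i) :
    PSD19 s hs u b 0 0 := by
  intro x _
  have h := Finset.sum_nonneg (fun (i : Fin (s - 2)) (_ : i ∈ Finset.univ) =>
    mul_nonneg (hb i) (sq_nonneg (x (Fin.castLE (Nat.sub_le s 2) i))))
  show (0:ℝ) ≤ _ + 0 / 2 * _ - 0 * _
  linarith

lemma psd_of (s : ℕ) (hs : 3 ≤ s) (u a : Fin (s - 2) → ℝ) (m t : ℝ)
    (hu : ∀ i, u i ≠ 0) (ha : ∀ i, 0 < a i) (hm : m < 0)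
    (h : 2 * m + (∑ i, u i ^ 2 / a i) * (m ^ 2 + t ^ 2) ≤ 0) :
    PSD19 s hs u a m t := by
  intro x hx
  set S := ∑ i, a i * x (Fin.castLE (Nat.sub_le s 2) i) ^ 2 with hS
  set w := ∑ i, u i * x (Fin.castLE (Nat.sub_le s 2) i) with hw
  set σ := ∑ i, u i ^ 2 / a i with hσdef
  have hσ : 0 < σ := sigma_pos s hs u a hu ha
  set Y := x ⟨s - 2, by omega⟩ with hYdef
  set Z := x ⟨s - 1, by omega⟩ with hZdef
  have hy : w + Y = 0 := hx
  have hcs : w ^ 2 ≤ σ * S := by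
    rw [hw, hσdef, hS]
    exact Finset.sum_sq_le_sum_mul_sum_of_sq_eq_mul Finset.univ
      (fun i _ => div_nonneg (sq_nonneg _) (ha i).le)
      (fun i _ => mul_nonneg (ha i).le (sq_nonneg _))
      (fun i _ => by
        rw [div_mul_eq_mul_div, mul_pow, mul_comm (a i), mul_div_assoc,
          mul_div_assoc, div_self (ha i).ne', mul_one])
  show (0:ℝ) ≤ S + m / 2 * (Y ^ 2 - Z ^ 2) - t * (Y * Z)
  have hy2 : Y = -w := by linarith
  rw [hy2]
  nlinarith [ mul_nonneg (by linarith : (0:ℝ) ≤ -(2*m)) (by linarith : (0:ℝ) ≤ σ * S - w ^ 2),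
    mul_nonneg (sq_nonneg w) (by linarith : (0:ℝ) ≤ -(2*m) - σ * (m^2 + t^2)),
    mul_nonneg hσ.le (sq_nonneg (t*w - m*Z)), mul_pos (by linarith : (0:ℝ) < -(2*m)) hσ]

/-- kernel direction for the boundary forms -/
noncomputable def kv19 (s : ℕ) (u a : Fin (s - 2) → ℝ) (m t : ℝ) : Fin s → ℝ :=
  pt19 s (fun i => m * u i / a i) (-(m * (∑ i, u i ^ 2 / a i))) ((∑ i, u i ^ 2 / a i) * t)

lemma kv19_sum_u (s : ℕ) (u a : Fin (s - 2) → ℝ) (m : ℝ) :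
    ∑ i, u i * (m * u i / a i) = m * (∑ i, u i ^ 2 / a i) := by
  rw [Finset.mul_sum]
  exact Finset.sum_congr rfl fun i _ => by ring

lemma kv19_L (s : ℕ) (hs : 3 ≤ s) (u a : Fin (s - 2) → ℝ) (m t : ℝ) :
    L19 s hs u (kv19 s u a m t) := by
  rw [kv19, L19_pt, kv19_sum_u]
  ring

lemma kv19_sum_self (s : ℕ) (u a : Fin (s - 2) → ℝ) (m : ℝ) (ha : ∀ i, 0 < a i) :
    ∑ i, a i * (m * u i / a i) ^ 2 = m ^ 2 * (∑ i, u i ^ 2 / a i) := by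
  rw [Finset.mul_sum]
  refine Finset.sum_congr rfl fun i _ => ?_
  field_simp [(ha i).ne']

lemma key19 (s : ℕ) (hs : 3 ≤ s) (u : Fin (s - 2) → ℝ) (hu : ∀ i, u i ≠ 0)
    (a : Fin (s - 2) → ℝ) (m t : ℝ) (ha : ∀ i, 0 < a i) (hm : m < 0)
    (heq : (∑ i, u i ^ 2 / a i) * (m ^ 2 + t ^ 2) = -(2 * m))
    (a₁ : Fin (s - 2) → ℝ) (m₁ t₁ : ℝ) (hpsd : PSD19 s hs u a₁ m₁ t₁)
    (hv : Q19 s hs a₁ m₁ t₁ (kv19 s u a m t) = 0) :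
    ∃ c : ℝ, 0 ≤ c ∧ ∀ x, Q19 s hs a₁ m₁ t₁ x = c * Q19 s hs a m t x := by
  set σ := ∑ i, u i ^ 2 / a i with hσdef
  have hσ : 0 < σ := sigma_pos s hs u a hu ha
  have hm' : m ≠ 0 := ne_of_lt hm
  -- m₁ ≤ 0
  have hm1 : m₁ ≤ 0 := by
    have hL : L19 s hs u (pt19 s (fun _ => 0) 0 1) := by
      rw [L19_pt]; simp
    have h := hpsd _ hL
    rw [Q19_pt] at h
    simp at h
    linarith
  -- value at kernel vector
  have hv' : (∑ i, a₁ i * (m * u i / a i) ^ 2) +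
      m₁ / 2 * ((-(m * σ)) ^ 2 - (σ * t) ^ 2) - t₁ * (-(m * σ) * (σ * t)) = 0 := by
    rw [← Q19_pt s hs]
    exact hv
  set S₁ := ∑ i, a₁ i * (m * u i / a i) ^ 2 with hS₁
  -- z-direction
  have hbz : (-(m₁ * (σ * t)) + t₁ * (m * σ)) = 0 := by
    apply lin_zero _ (-(m₁ / 2))
    intro r
    have hL : L19 s hs u (pt19 s (fun i => m * u i / a i) (-(m * σ)) (σ * t + r)) := by
      rw [L19_pt, kv19_sum_u]; ring
    have h := hpsd _ hL
    rw [Q19_pt, ← hS₁] at h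
    have e : S₁ + m₁ / 2 * ((-(m * σ)) ^ 2 - (σ * t + r) ^ 2) -
        t₁ * (-(m * σ) * (σ * t + r))
        = (S₁ + m₁ / 2 * ((-(m * σ)) ^ 2 - (σ * t) ^ 2) - t₁ * (-(m * σ) * (σ * t)))
          + ((-(m₁ * (σ * t)) + t₁ * (m * σ)) * r + (-(m₁ / 2)) * r ^ 2) := by ring
    rw [e, hv'] at h
    linarith
  have ht1 : t₁ * m = m₁ * t := by
    have h0 : σ * (t₁ * m - m₁ * t) = 0 := by linear_combination hbz
    rcases mul_eq_zero.1 h0 with h | h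
    · exact absurd h (ne_of_gt hσ)
    · linarith
  -- coordinate directions
  have ha1 : ∀ i, a₁ i * m = m₁ * a i := by
    intro i
    have hbi : (2 * a₁ i * (m * u i / a i) + u i * (m₁ * (m * σ) + t₁ * (σ * t))) = 0 := by
      apply lin_zero _ (a₁ i + m₁ * u i ^ 2 / 2)
      intro r
      have hL : L19 s hs u (pt19 s (fun j => m * u j / a j + if j = i then r else 0)
          (-(m * σ) - u i * r) (σ * t)) := by
        rw [L19_pt]
        have hterm : ∀ j ∈ Finset.univ, u j * (m * u j / a j + if j = i then r else 0)
            = u j * (m * u j / a j) + (if j = i then u i * r else 0) := by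
          intro j _
          rcases eq_or_ne j i with rfl | hne
          · split_ifs with hif
            · ring
            · exact absurd rfl hif
          · rw [if_neg hne, if_neg hne]
            ring
        rw [Finset.sum_congr rfl hterm, Finset.sum_add_distrib,
          Finset.sum_ite_eq' Finset.univ i (fun _ => u i * r), kv19_sum_u]
        simp only [Finset.mem_univ, if_true]
        ring
      have h := hpsd _ hL
      rw [Q19_pt] at h
      have hterm2 : ∀ j ∈ Finset.univ, a₁ j * (m * u j / a j + if j = i then r else 0) ^ 2
          = a₁ j * (m * u j / a j) ^ 2
            + (if j = i then 2 * a₁ i * (m * u i / a i) * r + a₁ i * r ^ 2 else 0) := by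
        intro j _
        rcases eq_or_ne j i with rfl | hne
        · split_ifs with hif
          · ring
          · exact absurd rfl hif
        · rw [if_neg hne, if_neg hne]
          ring
      have hQsplit : ∑ j, a₁ j * (m * u j / a j + if j = i then r else 0) ^ 2
          = S₁ + (2 * a₁ i * (m * u i / a i) * r + a₁ i * r ^ 2) := by
        rw [Finset.sum_congr rfl hterm2, Finset.sum_add_distrib,
          Finset.sum_ite_eq' Finset.univ i
            (fun _ => 2 * a₁ i * (m * u i / a i) * r + a₁ i * r ^ 2), ← hS₁]
        simp only [Finset.mem_univ, if_true]
      rw [hQsplit] at h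
      have e : S₁ + (2 * a₁ i * (m * u i / a i) * r + a₁ i * r ^ 2) +
            m₁ / 2 * ((-(m * σ) - u i * r) ^ 2 - (σ * t) ^ 2) -
            t₁ * ((-(m * σ) - u i * r) * (σ * t))
          = (S₁ + m₁ / 2 * ((-(m * σ)) ^ 2 - (σ * t) ^ 2) - t₁ * (-(m * σ) * (σ * t)))
            + ((2 * a₁ i * (m * u i / a i) + u i * (m₁ * (m * σ) + t₁ * (σ * t))) * r
               + (a₁ i + m₁ * u i ^ 2 / 2) * r ^ 2) := by ring
      rw [e, hv'] at h
      linarith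
    have ha' : a i ≠ 0 := (ha i).ne'
    have hu' : u i ≠ 0 := hu i
    field_simp at hbi
    have h2 : 2 * u i * m * (a₁ i * m - m₁ * a i) = 0 := by
      linear_combination m * hbi - (u i * a i * σ * t) * ht1 - (u i * a i * m₁) * heq
    rcases mul_eq_zero.1 h2 with h | h
    · exact absurd h (mul_ne_zero (mul_ne_zero two_ne_zero hu') hm')
    · linarith
  -- assemble
  obtain ⟨c, hc⟩ : ∃ c : ℝ, c = m₁ / m := ⟨_, rfl⟩
  have hmc : m₁ = c * m := by rw [hc]; field_simp
  have htc : t₁ = c * t := by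
    rw [hc, div_mul_eq_mul_div, eq_div_iff hm']
    linear_combination ht1
  have hac : ∀ i, a₁ i = c * a i := fun i => by
    rw [hc, div_mul_eq_mul_div, eq_div_iff hm']
    linear_combination ha1 i
  refine ⟨c, ?_, ?_⟩
  · rw [hc, div_nonneg_iff]
    right
    exact ⟨hm1, hm.le⟩
  · intro x
    have hsum : ∑ i, a₁ i * x (Fin.castLE (Nat.sub_le s 2) i) ^ 2
        = c * ∑ i, a i * x (Fin.castLE (Nat.sub_le s 2) i) ^ 2 := by
      rw [Finset.mul_sum]
      exact Finset.sum_congr rfl fun i _ => by rw [hac i]; ring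
    show (∑ i, a₁ i * x (Fin.castLE (Nat.sub_le s 2) i) ^ 2) +
        m₁ / 2 * (x ⟨s - 2, by omega⟩ ^ 2 - x ⟨s - 1, by omega⟩ ^ 2) -
        t₁ * (x ⟨s - 2, by omega⟩ * x ⟨s - 1, by omega⟩)
      = c * ((∑ i, a i * x (Fin.castLE (Nat.sub_le s 2) i) ^ 2) +
        m / 2 * (x ⟨s - 2, by omega⟩ ^ 2 - x ⟨s - 1, by omega⟩ ^ 2) -
        t * (x ⟨s - 2, by omega⟩ * x ⟨s - 1, by omega⟩))
    rw [hsum, hmc, htc]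
    ring

lemma sum_single_sq (s : ℕ) (f : Fin (s - 2) → ℝ) (i : Fin (s - 2)) :
    ∑ j, f j * (if j = i then (1:ℝ) else 0) ^ 2 = f i := by
  rw [Finset.sum_congr rfl (fun j _ =>
    show f j * (if j = i then (1:ℝ) else 0) ^ 2 = if j = i then f i else 0 by
      rcases eq_or_ne j i with rfl | h
      · simp
      · simp [h]),
    Finset.sum_ite_eq' Finset.univ i (fun _ => f i)]
  simp

lemma sum_single_mul (s : ℕ) (f : Fin (s - 2) → ℝ) (i : Fin (s - 2)) :
    ∑ j, f j * (if j = i then (1:ℝ) else 0) = f i := by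
  rw [Finset.sum_congr rfl (fun j _ =>
    show f j * (if j = i then (1:ℝ) else 0) = if j = i then f i else 0 by
      rcases eq_or_ne j i with rfl | h
      · simp
      · simp [h]),
    Finset.sum_ite_eq' Finset.univ i (fun _ => f i)]
  simp

lemma single_L (s : ℕ) (hs : 3 ≤ s) (u : Fin (s - 2) → ℝ) (i : Fin (s - 2)) (z : ℝ) :
    L19 s hs u (pt19 s (fun j => if j = i then 1 else 0) (-(u i)) z) := by
  rw [L19_pt, sum_single_mul]
  ring

lemma zero_L (s : ℕ) (hs : 3 ≤ s) (u : Fin (s - 2) → ℝ) (z : ℝ) :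
    L19 s hs u (pt19 s (fun _ => 0) 0 z) := by
  rw [L19_pt]
  simp

lemma Q19_single (s : ℕ) (hs : 3 ≤ s) (a : Fin (s - 2) → ℝ) (m t : ℝ)
    (i : Fin (s - 2)) (y z : ℝ) :
    Q19 s hs a m t (pt19 s (fun j => if j = i then 1 else 0) y z)
      = a i + m / 2 * (y ^ 2 - z ^ 2) - t * (y * z) := by
  rw [Q19_pt, sum_single_sq]

lemma Q19_kv (s : ℕ) (hs : 3 ≤ s) (u a : Fin (s - 2) → ℝ) (m t : ℝ)
    (ha : ∀ i, 0 < a i)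
    (heq : (∑ i, u i ^ 2 / a i) * (m ^ 2 + t ^ 2) = -(2 * m)) :
    Q19 s hs a m t (kv19 s u a m t) = 0 := by
  rw [kv19, Q19_pt, kv19_sum_self s u a m ha]
  linear_combination (m * (∑ i, u i ^ 2 / a i) / 2) * heq

lemma part2 (s : ℕ) (hs : 3 ≤ s) (u : Fin (s - 2) → ℝ) (hu : ∀ i, u i ≠ 0)
    (a : Fin (s - 2) → ℝ) (m t : ℝ) (ha : ∀ i, 0 < a i) (hm : m < 0)
    (hEq : 2 * m / (m ^ 2 + t ^ 2) + ∑ i, u i ^ 2 / a i = 0) :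
    PSD19 s hs u a m t ∧
      (Q19 s hs a m t ≠ 0 ∧ PSD19 s hs u a m t ∧
      ∀ (a₁ : Fin (s - 2) → ℝ) (m₁ t₁ : ℝ) (a₂ : Fin (s - 2) → ℝ) (m₂ t₂ : ℝ),
        PSD19 s hs u a₁ m₁ t₁ → PSD19 s hs u a₂ m₂ t₂ →
        (∀ x, Q19 s hs a m t x = Q19 s hs a₁ m₁ t₁ x + Q19 s hs a₂ m₂ t₂ x) →
        (∃ c : ℝ, 0 ≤ c ∧ ∀ x, Q19 s hs a₁ m₁ t₁ x = c * Q19 s hs a m t x) ∧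
        (∃ c : ℝ, 0 ≤ c ∧ ∀ x, Q19 s hs a₂ m₂ t₂ x = c * Q19 s hs a m t x)) := by
  have hm' : m ≠ 0 := ne_of_lt hm
  have hpos2 : (0:ℝ) < m ^ 2 + t ^ 2 := by positivity
  have heq : (∑ i, u i ^ 2 / a i) * (m ^ 2 + t ^ 2) = -(2 * m) := by
    field_simp at hEq
    linear_combination hEq
  have hpsd : PSD19 s hs u a m t :=
    psd_of s hs u a m t hu ha hm (by linarith [heq])
  refine ⟨hpsd, ?_, hpsd, ?_⟩
  · intro h0
    have h := congrFun h0 (pt19 s (fun _ => 0) 0 1)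
    rw [Q19_pt] at h
    simp at h
    exact hm' h
  · intro a₁ m₁ t₁ a₂ m₂ t₂ h1 h2 hadd
    have hkL := kv19_L s hs u a m t
    have hQkv := Q19_kv s hs u a m t ha heq
    have hsum0 : Q19 s hs a₁ m₁ t₁ (kv19 s u a m t)
        + Q19 s hs a₂ m₂ t₂ (kv19 s u a m t) = 0 := by
      rw [← hadd _]
      exact hQkv
    have n1 := h1 _ hkL
    have n2 := h2 _ hkL
    have hv1 : Q19 s hs a₁ m₁ t₁ (kv19 s u a m t) = 0 := by linarith
    have hv2 : Q19 s hs a₂ m₂ t₂ (kv19 s u a m t) = 0 := by linarith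
    exact ⟨key19 s hs u hu a m t ha hm heq a₁ m₁ t₁ h1 hv1,
           key19 s hs u hu a m t ha hm heq a₂ m₂ t₂ h2 hv2⟩

lemma part1 (s : ℕ) (hs : 3 ≤ s) (u : Fin (s - 2) → ℝ) (hu : ∀ i, u i ≠ 0)
    (a : Fin (s - 2) → ℝ) (m t : ℝ)
    (hQne : Q19 s hs a m t ≠ 0) (hpsd : PSD19 s hs u a m t)
    (hext : ∀ (a₁ : Fin (s - 2) → ℝ) (m₁ t₁ : ℝ) (a₂ : Fin (s - 2) → ℝ) (m₂ t₂ : ℝ),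
      PSD19 s hs u a₁ m₁ t₁ → PSD19 s hs u a₂ m₂ t₂ →
      (∀ x, Q19 s hs a m t x = Q19 s hs a₁ m₁ t₁ x + Q19 s hs a₂ m₂ t₂ x) →
      (∃ c : ℝ, 0 ≤ c ∧ ∀ x, Q19 s hs a₁ m₁ t₁ x = c * Q19 s hs a m t x) ∧
      (∃ c : ℝ, 0 ≤ c ∧ ∀ x, Q19 s hs a₂ m₂ t₂ x = c * Q19 s hs a m t x)) :
    (∃ i, 0 < a i ∧ (∀ j, j ≠ i → a j = 0) ∧ m = 0 ∧ t = 0) ∨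
      ((∀ i, 0 < a i) ∧ m < 0 ∧ 2 * m / (m ^ 2 + t ^ 2) + ∑ i, u i ^ 2 / a i = 0) := by
  have i0 : Fin (s - 2) := ⟨0, by omega⟩
  have hm0 : m ≤ 0 := by
    have h := hpsd _ (zero_L s hs u 1)
    rw [Q19_pt] at h
    simp at h
    linarith
  rcases lt_or_eq_of_le hm0 with hm | hm
  · -- m < 0 case
    right
    have hapos : ∀ i, 0 < a i := by
      intro i
      have h := hpsd _ (single_L s hs u i 0)
      rw [Q19_single] at h
      nlinarith [pow_two_pos_of_ne_zero (hu i), h]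
    set σ := ∑ i, u i ^ 2 / a i with hσdef
    have hσ : 0 < σ := sigma_pos s hs u a hu hapos
    have hm' : m ≠ 0 := ne_of_lt hm
    have hpos2 : (0:ℝ) < m ^ 2 + t ^ 2 := by positivity
    have hle : 2 * m + σ * (m ^ 2 + t ^ 2) ≤ 0 := by
      have h := hpsd _ (kv19_L s hs u a m t)
      rw [kv19, Q19_pt, kv19_sum_self s u a m hapos] at h
      nlinarith [h, mul_neg_of_neg_of_pos hm hσ, hσ]
    by_cases heqz : 2 * m + σ * (m ^ 2 + t ^ 2) = 0
    · refine ⟨hapos, hm, ?_⟩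
      have e : 2 * m / (m ^ 2 + t ^ 2) + σ = (2 * m + σ * (m ^ 2 + t ^ 2)) / (m ^ 2 + t ^ 2) := by
        field_simp
      rw [e, heqz, zero_div]
    · exfalso
      have hlt : 2 * m + σ * (m ^ 2 + t ^ 2) < 0 := lt_of_le_of_ne hle heqz
      set A := a i0 with hA
      set U := u i0 with hU
      have hApos : 0 < A := hapos i0
      have hU2 : 0 < U ^ 2 := pow_two_pos_of_ne_zero (hu i0)
      set D := -(2 * m) - σ * (m ^ 2 + t ^ 2) with hD
      have hDpos : 0 < D := by simp only [hD]; linarith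
      set ε := min (1/2 : ℝ) (D * A / (2 * U ^ 2 * (m ^ 2 + t ^ 2))) with hε
      have hε0 : 0 < ε := lt_min (by norm_num) (div_pos (mul_pos hDpos hApos) (by positivity))
      have hεh : ε ≤ 1/2 := min_le_left _ _
      have h1ε : (0:ℝ) < 1 - ε := by linarith
      set a₂ := fun k => if k = i0 then (1 - ε) * a k else a k with ha₂
      set a₁ := fun k => if k = i0 then ε * a k else (0:ℝ) with ha₁
      have ha₂pos : ∀ i, 0 < a₂ i := by
        intro i
        simp only [ha₂]
        split_ifs
        · exact mul_pos h1ε (hapos i)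
        · exact hapos i
      have hσ₂ : ∑ i, u i ^ 2 / a₂ i = σ + (U ^ 2 / ((1 - ε) * A) - U ^ 2 / A) := by
        rw [hσdef, show ∀ (x y z : ℝ), x + (y - z) = (x - z) + y from fun x y z => by ring]
        rw [Finset.sum_congr rfl (fun j (_ : j ∈ Finset.univ) =>
          show u j ^ 2 / a₂ j
              = u j ^ 2 / a j + (if j = i0 then U ^ 2 / ((1 - ε) * A) - U ^ 2 / A else 0) by
            simp only [ha₂]
            rcases eq_or_ne j i0 with rfl | h
            · rw [if_pos rfl, if_pos rfl, ← hA, ← hU]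
              rw [div_add' _ _ _ (hapos j).ne', div_sub_div _ _ (mul_ne_zero h1ε.ne' hApos.ne') hApos.ne']
              field_simp [hA, (hapos j).ne']
              ring
            · rw [if_neg h, if_neg h, add_zero]),
          Finset.sum_add_distrib,
          Finset.sum_ite_eq' Finset.univ i0 (fun _ => U ^ 2 / ((1 - ε) * A) - U ^ 2 / A)]
        simp only [Finset.mem_univ, if_true]
        ring
      have hεle : ε * (2 * U ^ 2 * (m ^ 2 + t ^ 2)) ≤ D * A := by
        have := min_le_right (1/2 : ℝ) (D * A / (2 * U ^ 2 * (m ^ 2 + t ^ 2)))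
        rw [← le_div_iff₀ (by positivity)]
        exact this
      have hEbound : (U ^ 2 / ((1 - ε) * A) - U ^ 2 / A) * (m ^ 2 + t ^ 2) ≤ D := by
        have hE : U ^ 2 / ((1 - ε) * A) - U ^ 2 / A = U ^ 2 * ε / ((1 - ε) * A) := by
          field_simp
          ring
        rw [hE, div_mul_eq_mul_div, div_le_iff₀ (by positivity)]
        nlinarith [hεle, mul_nonneg (by linarith : (0:ℝ) ≤ 1/2 - ε) (mul_pos hDpos hApos).le]
      have hpsd2 : PSD19 s hs u a₂ m t := by
        apply psd_of s hs u a₂ m t hu ha₂pos hm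
        rw [hσ₂]
        nlinarith [hEbound]
      have hpsd1 : PSD19 s hs u a₁ 0 0 := by
        apply psd_diag
        intro i
        simp only [ha₁]
        split_ifs
        · exact mul_nonneg hε0.le (hapos i).le
        · exact le_refl 0
      have hadd : ∀ x, Q19 s hs a m t x = Q19 s hs a₁ 0 0 x + Q19 s hs a₂ m t x := by
        intro x
        show (∑ i, a i * x (Fin.castLE (Nat.sub_le s 2) i) ^ 2) +
            m / 2 * (x ⟨s - 2, by omega⟩ ^ 2 - x ⟨s - 1, by omega⟩ ^ 2) -
            t * (x ⟨s - 2, by omega⟩ * x ⟨s - 1, by omega⟩)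
          = ((∑ i, a₁ i * x (Fin.castLE (Nat.sub_le s 2) i) ^ 2) +
            0 / 2 * (x ⟨s - 2, by omega⟩ ^ 2 - x ⟨s - 1, by omega⟩ ^ 2) -
            0 * (x ⟨s - 2, by omega⟩ * x ⟨s - 1, by omega⟩)) +
            ((∑ i, a₂ i * x (Fin.castLE (Nat.sub_le s 2) i) ^ 2) +
            m / 2 * (x ⟨s - 2, by omega⟩ ^ 2 - x ⟨s - 1, by omega⟩ ^ 2) -
            t * (x ⟨s - 2, by omega⟩ * x ⟨s - 1, by omega⟩))
        rw [Finset.sum_congr rfl (fun j (_ : j ∈ Finset.univ) =>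
          show a j * x (Fin.castLE (Nat.sub_le s 2) j) ^ 2
              = a₁ j * x (Fin.castLE (Nat.sub_le s 2) j) ^ 2
                + a₂ j * x (Fin.castLE (Nat.sub_le s 2) j) ^ 2 by
            simp only [ha₁, ha₂]
            split_ifs
            · ring
            · ring), Finset.sum_add_distrib]
        ring
      have ha1i0 : a₁ i0 = ε * a i0 := if_pos rfl
      clear_value a₁ a₂ ε D σ A U
      obtain ⟨⟨c, hc0, hc⟩, -⟩ := hext a₁ 0 0 a₂ m t hpsd1 hpsd2 hadd
      have hcz := hc (pt19 s (fun _ => 0) 0 1)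
      rw [Q19_pt, Q19_pt] at hcz
      simp at hcz
      -- hcz : 0 = c * (- m/2) roughly; conclude c * m = 0
      have hcm : c = 0 := by
        rcases hcz with h | h
        · exact h
        · exact absurd h hm'
      have hci := hc (pt19 s (fun k => if k = i0 then 1 else 0) 0 0)
      rw [Q19_single, Q19_single] at hci
      rw [ha1i0, hcm] at hci
      rw [hA] at hApos
      nlinarith only [hci, hε0, hApos]
  · -- m = 0 case
    left
    subst hm
    have ht0 : t * u i0 = 0 := by
      apply aff_zero (a i0) (t * u i0)
      intro ζ
      have h := hpsd _ (single_L s hs u i0 ζ)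
      rw [Q19_single] at h
      have e : a i0 + 0 / 2 * ((-(u i0)) ^ 2 - ζ ^ 2) - t * (-(u i0) * ζ)
          = a i0 + (t * u i0) * ζ := by ring
      rw [e] at h
      exact h
    have ht : t = 0 := by
      rcases mul_eq_zero.1 ht0 with h | h
      · exact h
      · exact absurd h (hu i0)
    subst ht
    have hak : ∀ i, 0 ≤ a i := by
      intro i
      have h := hpsd _ (single_L s hs u i 0)
      rw [Q19_single] at h
      have e : a i + 0 / 2 * ((-(u i)) ^ 2 - 0 ^ 2) - 0 * (-(u i) * 0) = a i := by ring
      rw [e] at h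
      exact h
    have hex : ∃ i, a i ≠ 0 := by
      by_contra h
      push_neg at h
      apply hQne
      funext x
      show (∑ i, a i * x (Fin.castLE (Nat.sub_le s 2) i) ^ 2) +
          0 / 2 * (x ⟨s - 2, by omega⟩ ^ 2 - x ⟨s - 1, by omega⟩ ^ 2) -
          0 * (x ⟨s - 2, by omega⟩ * x ⟨s - 1, by omega⟩) = 0
      rw [Finset.sum_eq_zero (fun i _ => by rw [h i, zero_mul])]
      ring
    obtain ⟨i1, hne1⟩ := hex
    have hpos1 : 0 < a i1 := lt_of_le_of_ne (hak i1) (Ne.symm hne1)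
    set a₁ := fun k => if k = i1 then a k else (0:ℝ) with ha₁
    set a₂ := fun k => if k = i1 then (0:ℝ) else a k with ha₂
    have hpsd1 : PSD19 s hs u a₁ 0 0 := psd_diag s hs u a₁ (fun i => by
      simp only [ha₁]; split_ifs; exacts [hak i, le_refl 0])
    have hpsd2 : PSD19 s hs u a₂ 0 0 := psd_diag s hs u a₂ (fun i => by
      simp only [ha₂]; split_ifs; exacts [le_refl 0, hak i])
    have hadd : ∀ x, Q19 s hs a 0 0 x = Q19 s hs a₁ 0 0 x + Q19 s hs a₂ 0 0 x := by
      intro x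
      show (∑ i, a i * x (Fin.castLE (Nat.sub_le s 2) i) ^ 2) +
          0 / 2 * (x ⟨s - 2, by omega⟩ ^ 2 - x ⟨s - 1, by omega⟩ ^ 2) -
          0 * (x ⟨s - 2, by omega⟩ * x ⟨s - 1, by omega⟩)
        = ((∑ i, a₁ i * x (Fin.castLE (Nat.sub_le s 2) i) ^ 2) +
          0 / 2 * (x ⟨s - 2, by omega⟩ ^ 2 - x ⟨s - 1, by omega⟩ ^ 2) -
          0 * (x ⟨s - 2, by omega⟩ * x ⟨s - 1, by omega⟩)) +
          ((∑ i, a₂ i * x (Fin.castLE (Nat.sub_le s 2) i) ^ 2) +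
          0 / 2 * (x ⟨s - 2, by omega⟩ ^ 2 - x ⟨s - 1, by omega⟩ ^ 2) -
          0 * (x ⟨s - 2, by omega⟩ * x ⟨s - 1, by omega⟩))
      rw [Finset.sum_congr rfl (fun j (_ : j ∈ Finset.univ) =>
        show a j * x (Fin.castLE (Nat.sub_le s 2) j) ^ 2
            = a₁ j * x (Fin.castLE (Nat.sub_le s 2) j) ^ 2
              + a₂ j * x (Fin.castLE (Nat.sub_le s 2) j) ^ 2 by
          simp only [ha₁, ha₂]
          split_ifs
          · ring
          · ring), Finset.sum_add_distrib]
      ring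
    have e1 : a₁ i1 = a i1 := if_pos rfl
    have e2 : ∀ j, j ≠ i1 → a₁ j = 0 := fun j hj => if_neg hj
    clear_value a₁ a₂
    obtain ⟨⟨c, hc0, hc⟩, -⟩ := hext a₁ 0 0 a₂ 0 0 hpsd1 hpsd2 hadd
    have hc1 := hc (pt19 s (fun k => if k = i1 then 1 else 0) 0 0)
    rw [Q19_single, Q19_single, e1] at hc1
    have hcc : a i1 * (1 - c) = 0 := by linear_combination hc1
    have hceq : c = 1 := by
      rcases mul_eq_zero.1 hcc with h | h
      · exact absurd h hne1
      · linarith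
    refine ⟨i1, hpos1, ?_, rfl, rfl⟩
    intro j hj
    have hcj := hc (pt19 s (fun k => if k = j then 1 else 0) 0 0)
    rw [Q19_single, Q19_single] at hcj
    rw [e2 j hj, hceq] at hcj
    linarith [hcj]

theorem stmt_19 (s : ℕ) (hs : 3 ≤ s) (u : Fin (s - 2) → ℝ) (hu : ∀ i, u i ≠ 0) :
    (∀ (a : Fin (s - 2) → ℝ) (m t : ℝ), ExtremeRay19 s hs u a m t →
      (∃ i, 0 < a i ∧ (∀ j, j ≠ i → a j = 0) ∧ m = 0 ∧ t = 0) ∨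
      ((∀ i, 0 < a i) ∧ m < 0 ∧ 2 * m / (m ^ 2 + t ^ 2) + ∑ i, u i ^ 2 / a i = 0)) ∧
    (∀ (a : Fin (s - 2) → ℝ) (m t : ℝ), (∀ i, 0 < a i) → m < 0 →
      2 * m / (m ^ 2 + t ^ 2) + ∑ i, u i ^ 2 / a i = 0 →
      PSD19 s hs u a m t ∧ ExtremeRay19 s hs u a m t) := by
  constructor
  · intro a m t hER
    obtain ⟨hQne, hpsd, hext⟩ := hER
    exact part1 s hs u hu a m t hQne hpsd hext
  · intro a m t ha hm hEq
    obtain ⟨h1, h2⟩ := part2 s hs u hu a m t ha hm hEq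
    exact ⟨h1, h2⟩
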